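/- Let p_u ≥ q_u for every u ∈ S. Then the (S,v)-(p,q)-connectivity satisfies: λ^{p,q}_G(S,v) = p_v + λ^q_G(S,v) if v ∈ S, and λ^{p,q}_G(S,v) = λ^q_G(S,v) if v ∉ S, where λ^q_G(S,v) is the maximum flow value from S \ {v} to v under node capacities q and unit edge capacities. -/

import Mathlib

open Finset

variable {V : Type*} [DecidableEq V] [Fintype V]

/-- The `(S,v)`-`(p,q)`-connectivity of a graph with edge set `E`, node
capacities `q`, and flow supplies `p`: the maximum flow value from a
super-source `s` (joined to each `u ∈ S` by `p_u` parallel edges) to `v`, with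
unit edge capacities and node capacities `q`.  By the (node-capacitated)
max-flow min-cut theorem it equals the minimum, over bisets `(X, X⁺)` with
`v ∉ X⁺`, of `q(X⁺ \ X)` plus the number of edges of `E` from `X` to `V \ X⁺`
plus `p(S \ X⁺)` (the super-source edges cut), which we take as the
definition. -/
noncomputable def lamPQ (E : Finset (V × V)) (p q : V → ℕ∞) (S : Finset V) (v : V) : ℕ∞ :=
  sInf {n : ℕ∞ | ∃ X Xp : Finset V, X ⊆ Xp ∧ v ∉ Xp ∧
    n = (∑ u ∈ Xp \ X, q u) +
        ((E.filter (fun e => e.1 ∈ X ∧ e.2 ∉ Xp)).card : ℕ∞) +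
        (∑ u ∈ S \ Xp, p u)}

/-- The `(S,v)`-`q`-connectivity `λ^q_G(S,v)`: the maximum flow value from
`S \ {v}` to `v` in `G` itself, under node capacities `q` and unit edge
capacities; by the node-capacitated max-flow min-cut theorem it equals the
minimum, over bisets `(X, X⁺)` with `S \ {v} ⊆ X⁺` and `v ∉ X⁺`, of
`q(X⁺ \ X)` plus the number of edges from `X` to `V \ X⁺`. -/
noncomputable def lamQset (E : Finset (V × V)) (q : V → ℕ∞) (S : Finset V) (v : V) : ℕ∞ :=
  sInf {n : ℕ∞ | ∃ X Xp : Finset V, X ⊆ Xp ∧ v ∉ Xp ∧ S \ {v} ⊆ Xp ∧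
    n = (∑ u ∈ Xp \ X, q u) +
        ((E.filter (fun e => e.1 ∈ X ∧ e.2 ∉ Xp)).card : ℕ∞)}

/-- if `p_u ≥ q_u` for every `u ∈ S`, then
`λ^{p,q}_G(S,v) = p_v + λ^q_G(S,v)` when `v ∈ S`, and
`λ^{p,q}_G(S,v) = λ^q_G(S,v)` when `v ∉ S`. -/
theorem lamPQ_eq_lamQ (E : Finset (V × V)) (p q : V → ℕ∞) (S : Finset V) (v : V)
    (hpq : ∀ u ∈ S, q u ≤ p u) :
    (v ∈ S → lamPQ E p q S v = p v + lamQset E q S v) ∧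
    (v ∉ S → lamPQ E p q S v = lamQset E q S v) := by
  classical
  rw [lamPQ, lamQset]
  set A := {n : ℕ∞ | ∃ X Xp : Finset V, X ⊆ Xp ∧ v ∉ Xp ∧
    n = (∑ u ∈ Xp \ X, q u) +
        ((E.filter (fun e => e.1 ∈ X ∧ e.2 ∉ Xp)).card : ℕ∞) +
        (∑ u ∈ S \ Xp, p u)} with hA
  set B := {n : ℕ∞ | ∃ X Xp : Finset V, X ⊆ Xp ∧ v ∉ Xp ∧ S \ {v} ⊆ Xp ∧
    n = (∑ u ∈ Xp \ X, q u) +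
        ((E.filter (fun e => e.1 ∈ X ∧ e.2 ∉ Xp)).card : ℕ∞)} with hB
  have hAne : A.Nonempty := ⟨_, ∅, ∅, Finset.Subset.refl _, Finset.notMem_empty v, rfl⟩
  have hBne : B.Nonempty :=
    ⟨_, ∅, S \ {v}, Finset.empty_subset _, by simp, Finset.Subset.refl _, rfl⟩
  have hAmem : sInf A ∈ A := csInf_mem hAne
  have hBmem : sInf B ∈ B := csInf_mem hBne
  obtain ⟨X, Xp, hXXp, hvXp, hSXp, hn⟩ := hBmem
  obtain ⟨Y, Yp, hYYp, hvYp, hm⟩ := hAmem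
  -- construct the modified biset for the lower bound on sInf A
  set Yp' := Yp ∪ (S \ {v}) with hYp'
  set T := (S \ {v}) \ Yp with hT
  have hTS : ∀ u ∈ T, u ∈ S := by
    intro u hu
    exact (Finset.mem_sdiff.mp (Finset.mem_sdiff.mp hu).1).1
  have hdisj : Disjoint (Yp \ Y) T :=
    Finset.disjoint_left.mpr
      (fun u hu hu' => (Finset.mem_sdiff.mp hu').2 (Finset.mem_sdiff.mp hu).1)
  have hsdiff : Yp' \ Y = (Yp \ Y) ∪ T := by
    ext u
    have := @hYYp u
    simp only [hYp', hT, Finset.mem_sdiff, Finset.mem_union]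
    tauto
  have hsplit : (∑ u ∈ Yp' \ Y, q u) = (∑ u ∈ Yp \ Y, q u) + (∑ u ∈ T, q u) := by
    rw [hsdiff, Finset.sum_union hdisj]
  have hTq : (∑ u ∈ T, q u) ≤ (∑ u ∈ T, p u) :=
    Finset.sum_le_sum (fun u hu => hpq u (hTS u hu))
  have hcard : ((E.filter (fun e => e.1 ∈ Y ∧ e.2 ∉ Yp')).card : ℕ∞) ≤
      ((E.filter (fun e => e.1 ∈ Y ∧ e.2 ∉ Yp)).card : ℕ∞) := by
    exact_mod_cast Nat.cast_le.mpr (Finset.card_le_card (by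
      intro e he
      simp only [Finset.mem_filter] at *
      exact ⟨he.1, he.2.1, fun h => he.2.2 (Finset.mem_union_left _ h)⟩))
  have hvYp' : v ∉ Yp' := by
    simp [hYp', hvYp]
  have hn'B : (∑ u ∈ Yp' \ Y, q u) +
      ((E.filter (fun e => e.1 ∈ Y ∧ e.2 ∉ Yp')).card : ℕ∞) ∈ B :=
    ⟨Y, Yp', hYYp.trans Finset.subset_union_left, hvYp', Finset.subset_union_right, rfl⟩
  have hBle : sInf B ≤ (∑ u ∈ Yp \ Y, q u) + (∑ u ∈ T, q u) +
      ((E.filter (fun e => e.1 ∈ Y ∧ e.2 ∉ Yp')).card : ℕ∞) := by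
    rw [← hsplit]; exact sInf_le hn'B
  constructor
  · -- v ∈ S
    intro hvS
    have hSYp : S \ Yp = insert v T := by
      ext u
      by_cases huv : u = v
      · subst huv
        simp [hvYp, hvS]
      · simp only [hT, Finset.mem_sdiff, Finset.mem_insert, Finset.mem_singleton]
        tauto
    have hvT : v ∉ T := by
      simp [hT]
    have hSsum : (∑ u ∈ S \ Yp, p u) = p v + ∑ u ∈ T, p u := by
      rw [hSYp, Finset.sum_insert hvT]
    have hSXp' : S \ Xp = {v} := by
      ext u
      simp only [Finset.mem_sdiff, Finset.mem_singleton]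
      constructor
      · rintro ⟨huS, huXp⟩
        by_contra huv
        exact huXp (hSXp (Finset.mem_sdiff.mpr ⟨huS, by simpa using huv⟩))
      · rintro rfl; exact ⟨hvS, hvXp⟩
    apply le_antisymm
    · -- sInf A ≤ p v + sInf B
      have : sInf B + p v ∈ A := by
        refine ⟨X, Xp, hXXp, hvXp, ?_⟩
        rw [hn, hSXp', Finset.sum_singleton]
      calc sInf A ≤ sInf B + p v := sInf_le this
        _ = p v + sInf B := add_comm _ _
    · -- p v + sInf B ≤ sInf A
      calc p v + sInf B
          ≤ p v + ((∑ u ∈ Yp \ Y, q u) + (∑ u ∈ T, q u) +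
            ((E.filter (fun e => e.1 ∈ Y ∧ e.2 ∉ Yp')).card : ℕ∞)) :=
            add_le_add_right hBle _
        _ ≤ p v + ((∑ u ∈ Yp \ Y, q u) + (∑ u ∈ T, p u) +
            ((E.filter (fun e => e.1 ∈ Y ∧ e.2 ∉ Yp)).card : ℕ∞)) :=
            add_le_add_right (add_le_add (add_le_add_right hTq _) hcard) _
        _ = (∑ u ∈ Yp \ Y, q u) +
            ((E.filter (fun e => e.1 ∈ Y ∧ e.2 ∉ Yp)).card : ℕ∞) +
            (∑ u ∈ S \ Yp, p u) := by
            rw [hSsum]; ring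
        _ = sInf A := hm.symm
  · -- v ∉ S
    intro hvS
    have hSv : S \ {v} = S := by
      rw [Finset.sdiff_singleton_eq_erase, Finset.erase_eq_of_notMem hvS]
    have hSXp' : S \ Xp = ∅ := by
      rw [Finset.sdiff_eq_empty_iff_subset]
      rw [hSv] at hSXp
      exact hSXp
    have hSYp : S \ Yp = T := by rw [hT, hSv]
    apply le_antisymm
    · have : sInf B ∈ A := by
        refine ⟨X, Xp, hXXp, hvXp, ?_⟩
        rw [hn, hSXp', Finset.sum_empty, add_zero]
      exact sInf_le this
    · calc sInf B
          ≤ (∑ u ∈ Yp \ Y, q u) + (∑ u ∈ T, q u) +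
            ((E.filter (fun e => e.1 ∈ Y ∧ e.2 ∉ Yp')).card : ℕ∞) := hBle
        _ ≤ (∑ u ∈ Yp \ Y, q u) + (∑ u ∈ T, p u) +
            ((E.filter (fun e => e.1 ∈ Y ∧ e.2 ∉ Yp)).card : ℕ∞) :=
            add_le_add (add_le_add_right hTq _) hcard
        _ = (∑ u ∈ Yp \ Y, q u) +
            ((E.filter (fun e => e.1 ∈ Y ∧ e.2 ∉ Yp)).card : ℕ∞) +
            (∑ u ∈ S \ Yp, p u) := by
            rw [hSYp]; ring
        _ = sInf A := hm.symm
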